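/- Fix integers d ≥ 1, r ≥ 0 and a constant c ∈ (0,1). Let q = binom(r+d, d) and p(u) = (u^s : s ∈ ℕ^d, |s| ≤ r) ∈ ℝ^q. Then there exists λ_0 > 0 (depending only on d, r, c) such that for every z ∈ ℝ^d and every a ∈ [c, 1] with B(z,a) ⊆ B(0,1) (sup-norm balls), the q × q moment matrix M(z,a) = ∫_{B(z,a)} p(u) p(u)ᵀ du satisfies bᵀ M(z,a) b ≥ λ_0 ‖b‖₂² for every b ∈ ℝ^q; in particular, the smallest eigenvalue of M(z,a) is bounded below by λ_0 uniformly over such (z, a). -/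

import Mathlib

open MeasureTheory Set
open scoped BigOperators

noncomputable section

/-- Multi-indices of total degree at most `r` (there are `binom(r+d,d)` of them). -/
abbrev MIdx (d r : ℕ) := {s : Fin d → Fin (r + 1) // (∑ k, (s k : ℕ)) ≤ r}

/-- Monomial associated with a multi-index: `u^s = u_1^{s_1} ⋯ u_d^{s_d}`. -/
def mono {d r : ℕ} (s : MIdx d r) (u : Fin d → ℝ) : ℝ := ∏ k, u k ^ (s.val k : ℕ)

namespace MomentAux
variable {d r : ℕ}

def Qf (b : MIdx d r → ℝ) (u : Fin d → ℝ) : ℝ := ∑ s : MIdx d r, b s * mono s u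

lemma continuous_Qf2 : Continuous (fun p : ((MIdx d r → ℝ) × (Fin d → ℝ)) => Qf p.1 p.2) := by
  unfold Qf mono
  exact continuous_finset_sum _ fun s _ => ((continuous_apply s).comp continuous_fst).mul
    (continuous_finset_prod _ fun k _ => (((continuous_apply k).comp continuous_snd).pow _))

lemma continuous_Qf (b : MIdx d r → ℝ) : Continuous (Qf b) :=
  continuous_Qf2.comp (Continuous.prodMk_right b)

lemma analyticQf (b : MIdx d r → ℝ) : AnalyticOnNhd ℝ (Qf b) Set.univ := by
  unfold Qf mono
  refine Finset.analyticOnNhd_fun_sum _ fun s _ => analyticOnNhd_const.mul ?_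
  exact Finset.analyticOnNhd_fun_prod _ fun k _ =>
    ((ContinuousLinearMap.proj k : (Fin d → ℝ) →L[ℝ] ℝ).analyticOnNhd _).pow _

def mIdxF (s : MIdx d r) : Fin d →₀ ℕ := Finsupp.equivFunOnFinite.symm (fun k => (s.val k : ℕ))

lemma mIdxF_inj : Function.Injective (mIdxF (d := d) (r := r)) := by
  intro s t h
  have h2 : ∀ k, ((s.val k : ℕ)) = (t.val k : ℕ) := fun k => by
    have := congrArg (fun f => Finsupp.equivFunOnFinite f k) h
    simpa [mIdxF] using this
  exact Subtype.ext (funext fun k => Fin.val_injective (h2 k))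

lemma coeffs_zero {b : MIdx d r → ℝ} {z : Fin d → ℝ} {ρ : ℝ} (hρ : 0 < ρ)
    (h : ∀ u ∈ Metric.ball z ρ, Qf b u = 0) : b = 0 := by
  have hall : ∀ u, Qf b u = 0 := by
    have := (analyticQf b).eqOn_zero_of_preconnected_of_eventuallyEq_zero
      isPreconnected_univ (z₀ := z) (Set.mem_univ z) ?_
    · intro u; exact this (Set.mem_univ u)
    · filter_upwards [Metric.ball_mem_nhds z hρ] with u hu
      exact h u hu
  set P : MvPolynomial (Fin d) ℝ := ∑ s : MIdx d r, MvPolynomial.monomial (mIdxF s) (b s) with hP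
  have heval : ∀ u, MvPolynomial.eval u P = Qf b u := by
    intro u
    rw [hP, map_sum]
    refine Finset.sum_congr rfl fun s _ => ?_
    rw [MvPolynomial.eval_monomial, mono]
    congr 1
    rw [Finsupp.prod_fintype _ _ (fun k => pow_zero _)]
    refine Finset.prod_congr rfl fun k _ => ?_
    simp [mIdxF]
  have hP0 : P = 0 := by
    apply MvPolynomial.funext
    intro x
    rw [heval, hall, map_zero]
  funext t
  have : MvPolynomial.coeff (mIdxF t) P = b t := by
    rw [hP, MvPolynomial.coeff_sum]
    rw [Finset.sum_eq_single t]
    · simp [MvPolynomial.coeff_monomial]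
    · intro s _ hst
      rw [MvPolynomial.coeff_monomial, if_neg (fun he => hst (mIdxF_inj he))]
    · intro hh; exact absurd (Finset.mem_univ t) hh
  rw [hP0] at this
  simpa using this.symm

lemma integrableOn (b : MIdx d r → ℝ) (z : Fin d → ℝ) (ρ : ℝ) :
    IntegrableOn (fun u => (Qf b u) ^ 2) (Metric.ball z ρ) volume :=
  (((continuous_Qf b).pow 2).continuousOn.integrableOn_compact
    (isCompact_closedBall z ρ)).mono_set Metric.ball_subset_closedBall

lemma integral_sq_pos {b : MIdx d r → ℝ} (hb : b ≠ 0) (z : Fin d → ℝ) {ρ : ℝ} (hρ : 0 < ρ) :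
    0 < ∫ u in Metric.ball z ρ, (Qf b u) ^ 2 := by
  rw [setIntegral_pos_iff_support_of_nonneg_ae]
  · obtain ⟨u₀, hu₀, hne⟩ : ∃ u₀ ∈ Metric.ball z ρ, Qf b u₀ ≠ 0 := by
      by_contra hcon
      push_neg at hcon
      exact hb (coeffs_zero hρ hcon)
    have hopen : IsOpen ({u | Qf b u ≠ 0} ∩ Metric.ball z ρ) :=
      (isOpen_ne_fun (continuous_Qf b) continuous_const).inter Metric.isOpen_ball
    have hsub : {u | Qf b u ≠ 0} ∩ Metric.ball z ρ ⊆
        Function.support (fun u => (Qf b u) ^ 2) ∩ Metric.ball z ρ := by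
      intro u hu
      exact ⟨by simp [Function.support, pow_eq_zero_iff]; exact hu.1, hu.2⟩
    refine lt_of_lt_of_le ?_ (measure_mono hsub)
    exact hopen.measure_pos volume ⟨u₀, hne, hu₀⟩
  · exact Filter.Eventually.of_forall fun u => sq_nonneg _
  · exact integrableOn b z ρ

lemma integral_translate (f : (Fin d → ℝ) → ℝ) (z : Fin d → ℝ) (ρ : ℝ) :
    ∫ u in Metric.ball z ρ, f u = ∫ v in Metric.ball (0 : Fin d → ℝ) ρ, f (z + v) := by
  rw [← integral_indicator measurableSet_ball, ← integral_indicator measurableSet_ball]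
  rw [← integral_add_left_eq_self (fun u => (Metric.ball z ρ).indicator f u) z]
  congr 1
  funext v
  by_cases hv : v ∈ Metric.ball (0 : Fin d → ℝ) ρ
  · rw [Set.indicator_of_mem hv, Set.indicator_of_mem]
    simpa [Metric.mem_ball, dist_eq_norm] using hv
  · rw [Set.indicator_of_notMem hv, Set.indicator_of_notMem]
    intro hmem
    apply hv
    simpa [Metric.mem_ball, dist_eq_norm] using hmem

lemma continuous_G {c : ℝ} :
    Continuous (fun p : ((Fin d → ℝ) × (MIdx d r → ℝ)) =>
      ∫ u in Metric.ball p.1 c, (Qf p.2 u) ^ 2) := by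
  have key : ∀ p : ((Fin d → ℝ) × (MIdx d r → ℝ)),
      (∫ u in Metric.ball p.1 c, (Qf p.2 u) ^ 2)
        = ∫ v in Metric.ball (0 : Fin d → ℝ) c, (Qf p.2 (p.1 + v)) ^ 2 := fun p =>
    integral_translate _ _ _
  have : Continuous (fun p : ((Fin d → ℝ) × (MIdx d r → ℝ)) =>
      ∫ v in Metric.ball (0 : Fin d → ℝ) c, (Qf p.2 (p.1 + v)) ^ 2) := by
    rw [continuous_iff_continuousAt]
    intro p₀
    set F : ((Fin d → ℝ) × (MIdx d r → ℝ)) → (Fin d → ℝ) → ℝ :=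
      fun p v => (Qf p.2 (p.1 + v)) ^ 2 with hFdef
    have hFc : Continuous (fun q : ((Fin d → ℝ) × (MIdx d r → ℝ)) × (Fin d → ℝ) =>
        F q.1 q.2) := by
      rw [hFdef]
      exact (continuous_Qf2.comp ((continuous_snd.comp continuous_fst).prodMk
        ((continuous_fst.comp continuous_fst).add continuous_snd))).pow 2
    have hcpt : IsCompact ((Metric.closedBall p₀ 1) ×ˢ
        (Metric.closedBall (0 : Fin d → ℝ) c)) :=
      (isCompact_closedBall _ _).prod (isCompact_closedBall _ _)
    obtain ⟨C, hC⟩ := hcpt.exists_bound_of_continuousOn hFc.continuousOn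
    apply continuousAt_of_dominated (bound := fun _ => C)
    · exact Filter.Eventually.of_forall fun p =>
        ((hFc.comp (Continuous.prodMk_right p)).aestronglyMeasurable)
    · filter_upwards [Metric.ball_mem_nhds p₀ one_pos] with p hp
      filter_upwards [ae_restrict_mem measurableSet_ball] with v hv
      exact hC (p, v) ⟨Metric.ball_subset_closedBall hp,
        Metric.ball_subset_closedBall hv⟩
    · exact integrableOn_const measure_ball_lt_top.ne
    · exact Filter.Eventually.of_forall fun v =>
        (hFc.comp (continuous_id.prodMk continuous_const)).continuousAt
  exact this.congr fun p => (key p).symm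

lemma norm_le_of_ball_subset {z : Fin d → ℝ} {a : ℝ} (ha : 0 < a) (ha1 : a ≤ 1)
    (h : Metric.ball z a ⊆ Metric.ball (0 : Fin d → ℝ) 1) : ‖z‖ ≤ 1 - a := by
  have hz1 : ‖z‖ < 1 := by
    have := h (Metric.mem_ball_self ha)
    simpa [dist_eq_norm] using this
  have key : ∀ t : ℝ, 0 ≤ t → t < a → ‖z‖ + t < 1 := by
    intro t ht hta
    by_cases hz : z = 0
    · rw [hz]; simp; linarith
    · have hzn : ‖z‖ ≠ 0 := norm_ne_zero_iff.2 hz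
      have hw : z + (t / ‖z‖) • z ∈ Metric.ball z a := by
        rw [Metric.mem_ball, dist_eq_norm]
        have : z + (t / ‖z‖) • z - z = (t / ‖z‖) • z := by abel
        rw [this, norm_smul, Real.norm_eq_abs,
          abs_of_nonneg (div_nonneg ht (norm_nonneg z)), div_mul_cancel₀ _ hzn]
        exact hta
      have hw1 := h hw
      rw [Metric.mem_ball, dist_eq_norm, sub_zero] at hw1
      have heq : z + (t / ‖z‖) • z = (1 + t / ‖z‖) • z := by
        rw [add_smul, one_smul]
      rw [heq, norm_smul, Real.norm_eq_abs,
        abs_of_nonneg (by positivity : (0:ℝ) ≤ 1 + t / ‖z‖), add_mul, one_mul,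
        div_mul_cancel₀ _ hzn] at hw1
      exact hw1
  by_contra hcon
  push_neg at hcon
  have h1 : 1 - ‖z‖ < a := by linarith
  set t := (1 - ‖z‖ + a) / 2 with hts
  have := key t (by linarith) (by rw [hts]; linarith)
  rw [hts] at this
  linarith

end MomentAux

/-- uniform lower bound for moment matrices over interior balls.
Fix `d ≥ 1`, `r ≥ 0`, `c ∈ (0,1)`. There is `λ₀ > 0` (depending only on `d, r, c`) such
that for every sup-norm ball `B(z,a) ⊆ B(0,1)` with `a ∈ [c,1]`, the moment matrix
`M(z,a) = ∫_{B(z,a)} p(u)p(u)ᵀ du` satisfies `bᵀ M(z,a) b ≥ λ₀ ‖b‖₂²` for every `b`. -/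
theorem moment_matrix_uniform_lower_bound
    (d r : ℕ) (hd : 1 ≤ d) (c : ℝ) (hc : c ∈ Set.Ioo (0 : ℝ) 1) :
    ∃ lam : ℝ, 0 < lam ∧
      ∀ (z : Fin d → ℝ) (a : ℝ), c ≤ a → a ≤ 1 →
        Metric.ball z a ⊆ Metric.ball (0 : Fin d → ℝ) 1 →
        ∀ b : MIdx d r → ℝ,
          lam * (∑ s : MIdx d r, b s ^ 2) ≤
            ∫ u in Metric.ball z a, (∑ s : MIdx d r, b s * mono s u) ^ 2 := by
  classical
  obtain ⟨hc0, hc1⟩ := hc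
  set s₀ : MIdx d r := ⟨fun _ => (0 : Fin (r + 1)), by simp⟩ with hs₀
  set S : Set (MIdx d r → ℝ) := {b | ∑ s : MIdx d r, b s ^ 2 = 1} with hS
  have hScomp : IsCompact S := by
    have hclosed : IsClosed S := isClosed_eq (by continuity) continuous_const
    refine (isCompact_closedBall (0 : MIdx d r → ℝ) 1).of_isClosed_subset hclosed ?_
    intro b hb
    rw [Metric.mem_closedBall, dist_zero_right]
    refine (pi_norm_le_iff_of_nonneg zero_le_one).2 fun s => ?_
    rw [Real.norm_eq_abs, ← sq_le_one_iff_abs_le_one]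
    calc b s ^ 2 ≤ ∑ t : MIdx d r, b t ^ 2 :=
          Finset.single_le_sum (f := fun t => b t ^ 2) (fun t _ => sq_nonneg _) (Finset.mem_univ s)
      _ = 1 := hb
  set K := (Metric.closedBall (0 : Fin d → ℝ) (1 - c)) ×ˢ S with hK
  have hKcomp : IsCompact K := (isCompact_closedBall _ _).prod hScomp
  have hKne : K.Nonempty := by
    refine ⟨(0, fun s => if s = s₀ then 1 else 0), ?_, ?_⟩
    · simpa using (by linarith : (0 : ℝ) ≤ 1 - c)
    · simp [hS, ite_pow, Finset.sum_ite_eq']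
  set G : (Fin d → ℝ) × (MIdx d r → ℝ) → ℝ :=
    fun p => ∫ u in Metric.ball p.1 c, (MomentAux.Qf p.2 u) ^ 2 with hG
  obtain ⟨p₀, hp₀K, hmin⟩ := hKcomp.exists_isMinOn hKne MomentAux.continuous_G.continuousOn
  rw [isMinOn_iff] at hmin
  refine ⟨G p₀, ?_, ?_⟩
  · refine MomentAux.integral_sq_pos ?_ p₀.1 hc0
    intro hb0
    have h2 := hp₀K.2
    rw [hS, hb0] at h2
    simp at h2
  · intro z a hca ha1 hsub b
    have ha0 : 0 < a := lt_of_lt_of_le hc0 hca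
    have hz : z ∈ Metric.closedBall (0 : Fin d → ℝ) (1 - c) := by
      rw [Metric.mem_closedBall, dist_zero_right]
      calc ‖z‖ ≤ 1 - a := MomentAux.norm_le_of_ball_subset ha0 ha1 hsub
        _ ≤ 1 - c := by linarith
    show G p₀ * (∑ s : MIdx d r, b s ^ 2) ≤
      ∫ u in Metric.ball z a, (MomentAux.Qf b u) ^ 2
    set T := ∑ s : MIdx d r, b s ^ 2 with hT
    have hT0 : 0 ≤ T := Finset.sum_nonneg fun s _ => sq_nonneg _
    rcases eq_or_lt_of_le hT0 with hT0' | hTpos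
    · rw [← hT0', mul_zero]
      exact integral_nonneg fun u => sq_nonneg _
    · set t := Real.sqrt T with htdef
      have htpos : 0 < t := Real.sqrt_pos.2 hTpos
      have ht2 : t ^ 2 = T := Real.sq_sqrt hT0
      set β : MIdx d r → ℝ := fun s => t⁻¹ * b s with hβ
      have hβS : β ∈ S := by
        rw [hS]
        show (∑ s : MIdx d r, (t⁻¹ * b s) ^ 2) = 1
        have : ∀ s : MIdx d r, (t⁻¹ * b s) ^ 2 = t⁻¹ ^ 2 * b s ^ 2 := fun s => mul_pow _ _ _
        rw [Finset.sum_congr rfl fun s _ => this s, ← Finset.mul_sum, ← hT, ← ht2]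
        field_simp
      have hQ : ∀ u, MomentAux.Qf b u = t * MomentAux.Qf β u := by
        intro u
        rw [MomentAux.Qf, MomentAux.Qf, Finset.mul_sum]
        refine Finset.sum_congr rfl fun s _ => ?_
        rw [hβ]
        field_simp
      have step1 : G p₀ ≤ ∫ u in Metric.ball z c, (MomentAux.Qf β u) ^ 2 :=
        hmin (z, β) ⟨hz, hβS⟩
      have step2 : (∫ u in Metric.ball z c, (MomentAux.Qf β u) ^ 2)
          ≤ ∫ u in Metric.ball z a, (MomentAux.Qf β u) ^ 2 := by
        refine setIntegral_mono_set (MomentAux.integrableOn β z a)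
          (Filter.Eventually.of_forall fun u => sq_nonneg _) ?_
        exact (Metric.ball_subset_ball hca).eventuallyLE
      have step3 : (∫ u in Metric.ball z a, (MomentAux.Qf b u) ^ 2)
          = T * ∫ u in Metric.ball z a, (MomentAux.Qf β u) ^ 2 := by
        rw [← MeasureTheory.integral_const_mul]
        refine integral_congr_ae (Filter.Eventually.of_forall fun u => ?_)
        show MomentAux.Qf b u ^ 2 = T * MomentAux.Qf β u ^ 2
        rw [hQ u, mul_pow, ht2]
      rw [step3, mul_comm (G p₀) T]
      exact mul_le_mul_of_nonneg_left (step1.trans step2) hT0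
end
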